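/- Let S ⊆ [0,1]^d be nonempty and ε ∈ [0,1]. Then HV(S^{+ε}) ≤ HV(S) + d · ε · (R + ε)^{d−1}. -/

import Mathlib

open MeasureTheory

/-- The dominated region of `S` with respect to the reference point `z`:
all points `y` with `z ≤ y ≤ u` componentwise for some `u ∈ S`. -/
def dominatedRegion {d : ℕ} (z : Fin d → ℝ) (S : Set (Fin d → ℝ)) : Set (Fin d → ℝ) :=
  {y | ∃ u ∈ S, z ≤ y ∧ y ≤ u}

/-- The dominated hypervolume: Lebesgue measure of the dominated region. -/
noncomputable def HV {d : ℕ} (z : Fin d → ℝ) (S : Set (Fin d → ℝ)) : ℝ :=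
  (volume (dominatedRegion z S)).toReal

/-- The ℓ∞-expansion `S^{+ε}` (the norm on `Fin d → ℝ` is the sup norm). -/
def expandLinf {d : ℕ} (S : Set (Fin d → ℝ)) (ε : ℝ) : Set (Fin d → ℝ) :=
  {x | ∃ s ∈ S, ‖x - s‖ ≤ ε}

open Set
open scoped ENNReal

namespace HVaux

variable {d : ℕ}

variable {d : ℕ}

def Dset (z : Fin d → ℝ) (K : Set (Fin d → ℝ)) (c : Fin d → ℝ) : Set (Fin d → ℝ) :=
  {y | z ≤ y ∧ ∃ u ∈ K, ∀ i, y i ≤ u i + c i}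

theorem Dset_subset_Icc (z : Fin d → ℝ) {K : Set (Fin d → ℝ)} (hK : K ⊆ Set.Icc 0 1)
    {c : Fin d → ℝ} {ε : ℝ} (hc : ∀ i, c i ≤ ε) :
    Dset z K c ⊆ Set.Icc z (fun _ => 1 + ε) := by
  rintro y ⟨hzy, u, hu, hyu⟩
  refine ⟨hzy, fun i => ?_⟩
  have h1 : u i ≤ 1 := by have := (hK hu).2 i; simpa using this
  have := hyu i
  have := hc i
  show y i ≤ 1 + ε
  linarith

theorem Dset_isCompact (z : Fin d → ℝ) {K : Set (Fin d → ℝ)} (hKc : IsCompact K)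
    (hK : K ⊆ Set.Icc 0 1) (c : Fin d → ℝ) : IsCompact (Dset z K c) := by
  set T : Set ((Fin d → ℝ) × (Fin d → ℝ)) :=
    (Prod.fst ⁻¹' K) ∩ ((⋂ i, {p | z i ≤ p.2 i}) ∩ (⋂ i, {p | p.2 i ≤ p.1 i + c i})) with hT
  have himg : Dset z K c = Prod.snd '' T := by
    ext y
    constructor
    · rintro ⟨hzy, u, hu, hyu⟩
      exact ⟨(u, y), ⟨hu, Set.mem_iInter.2 fun i => hzy i, Set.mem_iInter.2 hyu⟩, rfl⟩
    · rintro ⟨⟨u, y'⟩, ⟨hu, hzy, hyu⟩, rfl⟩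
      exact ⟨fun i => Set.mem_iInter.1 hzy i, u, hu, Set.mem_iInter.1 hyu⟩
  rw [himg]
  have hclosed : IsClosed T := by
    refine IsClosed.inter (hKc.isClosed.preimage continuous_fst) (IsClosed.inter ?_ ?_)
    · exact isClosed_iInter fun i =>
        isClosed_le continuous_const ((continuous_apply i).comp continuous_snd)
    · exact isClosed_iInter fun i =>
        isClosed_le ((continuous_apply i).comp continuous_snd)
          (((continuous_apply i).comp continuous_fst).add continuous_const)
  have hsub : T ⊆ K ×ˢ Set.Icc (z) (fun i => 1 + c i) := by
    rintro ⟨u, y⟩ ⟨hu, hzy, hyu⟩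
    refine ⟨hu, fun i => Set.mem_iInter.1 hzy i, fun i => ?_⟩
    have h1 : u i ≤ 1 := by have := (hK hu).2 i; simpa using this
    have := Set.mem_iInter.1 hyu i
    show y i ≤ 1 + c i
    simp only [Set.mem_setOf_eq] at this
    linarith
  exact ((hKc.prod isCompact_Icc).of_isClosed_subset hclosed hsub).image continuous_snd

theorem step (z : Fin d → ℝ) {K : Set (Fin d → ℝ)} (hKc : IsCompact K)
    (hK : K ⊆ Set.Icc 0 1) (hz : ∀ j, z j < 0) {ε : ℝ} (hε0 : 0 ≤ ε)
    {c : Fin d → ℝ} (hc0 : 0 ≤ c) (hcε : ∀ i, c i ≤ ε) (k : Fin d) :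
    volume (Dset z K (Function.update c k ε)) ≤ volume (Dset z K c)
      + ENNReal.ofReal (ε * ∏ i ∈ Finset.univ.erase k, (1 + ε - z i)) := by
  classical
  set c' := Function.update c k ε with hc'
  have hc'ε : ∀ i, c' i ≤ ε := by
    intro i
    rcases eq_or_ne i k with rfl | h
    · simp [hc']
    · simp [hc', Function.update_of_ne h]; exact hcε i
  set A := Dset z K c with hA
  set B := Dset z K c' with hB
  set e : Fin d → ℝ := fun i => if i = k then ε else 0 with he
  -- downward closedness of B in coordinate k
  have dwc : ∀ y ∈ B, ∀ t : ℝ, z k ≤ t → t ≤ y k → Function.update y k t ∈ B := by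
    rintro y ⟨hzy, u, hu, hyu⟩ t hzt hty
    refine ⟨fun i => ?_, u, hu, fun i => ?_⟩
    · rcases eq_or_ne i k with rfl | h
      · simpa using hzt
      · simp [Function.update_of_ne h]; exact hzy i
    · rcases eq_or_ne i k with rfl | h
      · simp only [Function.update_self]; exact le_trans hty (hyu i)
      · simp [Function.update_of_ne h]; exact hyu i
  set C := B \ {y | y + e ∈ B} with hC
  have h1 : B ⊆ A ∪ C := by
    intro y hy
    by_cases hye : y + e ∈ B
    · left
      obtain ⟨hzy', u, hu, hle⟩ := hye
      refine ⟨hy.1, u, hu, fun i => ?_⟩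
      have := hle i
      rcases eq_or_ne i k with rfl | h
      · simp [he, hc', Pi.add_apply] at this
        have h0 : (0:ℝ) ≤ c i := by have := hc0 i; simpa using this
        linarith
      · simp [he, hc', Pi.add_apply, Function.update_of_ne h, h] at this
        exact this
    · exact Or.inr ⟨hy, hye⟩
  have hBclosed : IsClosed B := (Dset_isCompact z hKc hK c').isClosed
  have hCmeas : MeasurableSet C := by
    have : {y : Fin d → ℝ | y + e ∈ B} = (fun y => y + e) ⁻¹' B := rfl
    exact hBclosed.measurableSet.diff
      (this ▸ (hBclosed.preimage (continuous_id.add continuous_const)).measurableSet)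
  set T : ℕ → Set (Fin d → ℝ) := fun n => (fun y => y - (n : ℝ) • e) ⁻¹' C with hT
  have hTmeas : ∀ n, MeasurableSet (T n) :=
    fun n => hCmeas.preimage (measurable_id.sub measurable_const)
  have hTvol : ∀ n, volume (T n) = volume C := by
    intro n
    have heq : (fun y : Fin d → ℝ => y - (n:ℝ) • e) = (fun y => (-((n:ℝ) • e)) + y) := by
      funext y; simp [sub_eq_add_neg, add_comm]
    show volume ((fun y : Fin d → ℝ => y - (n:ℝ) • e) ⁻¹' C) = volume C
    rw [heq]
    exact measure_preimage_add volume _ C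
  have hsubk : ∀ (x : Fin d → ℝ) (n : ℕ), (x - (n:ℝ) • e) k = x k - n * ε := by
    intro x n; simp [he]
  have hsubi : ∀ (x : Fin d → ℝ) (n : ℕ) (i : Fin d), i ≠ k → (x - (n:ℝ) • e) i = x i := by
    intro x n i hik; simp [he, hik]
  have hdisj : ∀ m n : ℕ, m < n → Disjoint (T m) (T n) := by
    intro m n hmn
    rw [Set.disjoint_left]
    intro x hxm hxn
    obtain ⟨haB, haE⟩ := hxm
    obtain ⟨hbB, hbE⟩ := hxn
    apply hbE
    have key : Function.update (x - (m:ℝ) • e) k ((x - (n:ℝ) • e) k + ε)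
        = (x - (n:ℝ) • e) + e := by
      funext i
      rcases eq_or_ne i k with rfl | h
      · simp [he]
      · rw [Function.update_of_ne h, hsubi x m i h]
        simp only [Pi.add_apply, hsubi x n i h, he]
        simp [h]
    have hzk : z k ≤ (x - (n:ℝ) • e) k + ε := by
      have := hbB.1 k
      linarith
    have hle : (x - (n:ℝ) • e) k + ε ≤ (x - (m:ℝ) • e) k := by
      rw [hsubk, hsubk]
      have : (m:ℝ) + 1 ≤ (n:ℝ) := by exact_mod_cast hmn
      nlinarith
    show (x - (n:ℝ) • e) + e ∈ B
    rw [← key]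
    exact dwc _ haB _ hzk hle
  have hCbox : C ⊆ Set.Icc z (fun _ => 1 + ε) :=
    Set.diff_subset.trans (Dset_subset_Icc z hK hc'ε)
  have hTbox : ∀ N n : ℕ, n < N →
      T n ⊆ Set.Icc z (fun i => if i = k then 1 + ε + N * ε else 1 + ε) := by
    intro N n hn y hy
    have h : y - (n:ℝ) • e ∈ Set.Icc z (fun _ => 1 + ε) := hCbox hy
    constructor <;> intro i
    · rcases eq_or_ne i k with rfl | hik
      · have h' := h.1 i
        rw [hsubk] at h'
        have hnn : (0:ℝ) ≤ (n:ℝ) * ε := by positivity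
        show z i ≤ y i
        linarith
      · have h' := h.1 i
        rw [hsubi y n i hik] at h'
        exact h'
    · rcases eq_or_ne i k with rfl | hik
      · have h' := h.2 i
        rw [hsubk] at h'
        simp only [if_pos rfl]
        have hnN : (n:ℝ) ≤ (N:ℝ) := by exact_mod_cast hn.le
        have h'' : y i - (n:ℝ) * ε ≤ 1 + ε := by simpa using h'
        show y i ≤ 1 + ε + (N:ℝ) * ε
        nlinarith
      · have h' := h.2 i
        rw [hsubi y n i hik] at h'
        simp only [if_neg hik]
        show y i ≤ 1 + ε
        simpa using h'
  set P := ∏ i ∈ Finset.univ.erase k, (1 + ε - z i) with hP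
  have hPnonneg : 0 ≤ P :=
    Finset.prod_nonneg fun i _ => by have := hz i; linarith
  have hztop : ∀ N : ℕ, z ≤ (fun i => if i = k then 1 + ε + N * ε else 1 + ε) := by
    intro N i
    have h0 := hz i
    have hnn : (0:ℝ) ≤ (N:ℝ) * ε := by positivity
    by_cases hik : i = k
    · subst hik
      have hgoal : z i ≤ 1 + ε + (N:ℝ) * ε := by linarith
      simpa using hgoal
    · show z i ≤ if i = k then 1 + ε + (N:ℝ) * ε else 1 + ε
      simp only [if_neg hik]; linarith
  have hIccN : ∀ N : ℕ, (volume (Set.Icc z (fun i => if i = k then 1 + ε + N * ε else 1 + ε))).toReal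
      = (1 + ε + N * ε - z k) * P := by
    intro N
    rw [Real.volume_Icc_pi_toReal (hztop N)]
    rw [← Finset.mul_prod_erase Finset.univ _ (Finset.mem_univ k)]
    congr 1
    · simp
    · refine Finset.prod_congr rfl fun i hi => ?_
      have hik : i ≠ k := Finset.ne_of_mem_erase hi
      simp [hik]
  have hIccfin : ∀ N : ℕ,
      volume (Set.Icc z (fun i => if i = k then 1 + ε + N * ε else 1 + ε)) ≠ ⊤ :=
    fun N => (isCompact_Icc.measure_lt_top).ne
  have hCfin : volume C ≠ ⊤ :=
    ne_top_of_le_ne_top (isCompact_Icc.measure_lt_top).ne (measure_mono hCbox)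
  set γ := (volume C).toReal with hγdef
  have hsum : ∀ N : ℕ, (N : ℝ≥0∞) * volume C ≤
      volume (Set.Icc z (fun i => if i = k then 1 + ε + N * ε else 1 + ε)) := by
    intro N
    have hpd : (↑(Finset.range N) : Set ℕ).PairwiseDisjoint T := by
      intro m _ n _ hmn
      rcases lt_or_gt_of_ne hmn with h | h
      · exact hdisj m n h
      · exact (hdisj n m h).symm
    calc (N : ℝ≥0∞) * volume C = ∑ n ∈ Finset.range N, volume (T n) := by
          simp [hTvol, Finset.sum_const, nsmul_eq_mul]
      _ = volume (⋃ n ∈ Finset.range N, T n) :=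
          (measure_biUnion_finset hpd fun n _ => hTmeas n).symm
      _ ≤ _ := measure_mono (Set.iUnion₂_subset fun n hn =>
          hTbox N n (Finset.mem_range.1 hn))
  have hreal : ∀ N : ℕ, (N : ℝ) * γ ≤ (1 + ε + N * ε - z k) * P := by
    intro N
    have h2 := ENNReal.toReal_mono (hIccfin N) (hsum N)
    rwa [ENNReal.toReal_mul, ENNReal.toReal_natCast, hIccN] at h2
  have hγP : γ ≤ ε * P := by
    by_contra hcon
    push_neg at hcon
    obtain ⟨N, hN⟩ := exists_nat_gt ((1 + ε - z k) * P / (γ - ε * P))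
    have h3 := hreal N
    have h4 : (1 + ε - z k) * P < (N:ℝ) * (γ - ε * P) := by
      rw [div_lt_iff₀ (by linarith)] at hN
      linarith
    nlinarith
  have hCle : volume C ≤ ENNReal.ofReal (ε * P) := by
    rw [← ENNReal.ofReal_toReal hCfin]
    exact ENNReal.ofReal_le_ofReal hγP
  calc volume B ≤ volume (A ∪ C) := measure_mono h1
    _ ≤ volume A + volume C := measure_union_le A C
    _ ≤ volume A + ENNReal.ofReal (ε * P) := add_le_add_right hCle _

/-- the coordinatewise shift vectors -/
def cseq (ε : ℝ) (m : ℕ) : Fin d → ℝ := fun i => if (i : ℕ) < m then ε else 0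

theorem cseq_zero (ε : ℝ) : (cseq ε 0 : Fin d → ℝ) = fun _ => 0 := by
  funext i; simp [cseq]

theorem cseq_succ (ε : ℝ) (m : ℕ) (hm : m < d) :
    (cseq ε (m + 1) : Fin d → ℝ) = Function.update (cseq ε m) ⟨m, hm⟩ ε := by
  funext i
  rcases eq_or_ne i ⟨m, hm⟩ with rfl | h
  · simp [cseq, Function.update_self]
  · rw [Function.update_of_ne h]
    have : (i : ℕ) ≠ m := fun hc => h (Fin.ext hc)
    simp only [cseq]
    have : ((i:ℕ) < m + 1) ↔ ((i:ℕ) < m) := by omega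
    rw [if_congr this rfl rfl]

theorem cseq_nonneg {ε : ℝ} (hε : 0 ≤ ε) (m : ℕ) : (0 : Fin d → ℝ) ≤ cseq ε m := by
  intro i; simp only [cseq, Pi.zero_apply]; split <;> simp [hε]

theorem cseq_le {ε : ℝ} (hε : 0 ≤ ε) (m : ℕ) (i : Fin d) : cseq ε m i ≤ ε := by
  simp only [cseq]; split <;> simp [hε]

theorem vol_Dset_closure_le [Nonempty (Fin d)] (z : Fin d → ℝ) (hz : ∀ j, z j < 0)
    {S : Set (Fin d → ℝ)} (hSsub : S ⊆ Set.Icc 0 1) :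
    volume (Dset z (closure S) (fun _ => 0)) ≤ volume {y | ∃ u ∈ S, z ≤ y ∧ y ≤ u} := by
  set D0 := {y : Fin d → ℝ | ∃ u ∈ S, z ≤ y ∧ y ≤ u} with hD0
  have hD0box : D0 ⊆ Set.Icc z 1 := by
    rintro y ⟨u, hu, hzy, hyu⟩
    exact ⟨hzy, le_trans hyu (hSsub hu).2⟩
  have hLbox : Dset z (closure S) (fun _ => 0) ⊆ Set.Icc z 1 := by
    rintro y ⟨hzy, u, hu, hyu⟩
    refine ⟨hzy, fun i => ?_⟩
    have h1 : u i ≤ 1 := by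
      have := ((closure_minimal hSsub isClosed_Icc) hu).2 i; simpa using this
    have h2 : y i ≤ u i + 0 := hyu i
    show y i ≤ 1
    linarith
  have hfin0 : volume D0 ≠ ⊤ :=
    ne_top_of_le_ne_top isCompact_Icc.measure_lt_top.ne (measure_mono hD0box)
  have hfinL : volume (Dset z (closure S) (fun _ => 0)) ≠ ⊤ :=
    ne_top_of_le_ne_top isCompact_Icc.measure_lt_top.ne (measure_mono hLbox)
  set m : ℝ := Finset.univ.inf' Finset.univ_nonempty (fun j => -z j) with hm
  have hm0 : 0 < m := by
    rw [hm, Finset.lt_inf'_iff]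
    intro j _
    have := hz j
    linarith
  have hmj : ∀ j, m ≤ -z j := fun j => Finset.inf'_le _ (Finset.mem_univ j)
  have key : ∀ lam : ℝ, 1 < lam →
      volume (Dset z (closure S) (fun _ => 0)) ≤ ENNReal.ofReal (lam ^ d) * volume D0 := by
    intro lam hlam
    have hlam0 : (0:ℝ) < lam := by linarith
    have hsub : Dset z (closure S) (fun _ => 0) ⊆ (AffineMap.homothety z lam) '' D0 := by
      rintro y ⟨hzy, u, hu, hyu⟩
      set x : Fin d → ℝ := fun i => z i + (y i - z i) / lam with hx
      have hδ : (0:ℝ) < (lam - 1) * m := mul_pos (by linarith) hm0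
      obtain ⟨u', hu'S, hdist⟩ := Metric.mem_closure_iff.1 hu _ hδ
      refine ⟨x, ⟨u', hu'S, fun i => ?_, fun i => ?_⟩, ?_⟩
      · have hzyi : z i ≤ y i := hzy i
        have : 0 ≤ (y i - z i) / lam := div_nonneg (by linarith) (by linarith)
        show z i ≤ z i + (y i - z i) / lam
        linarith
      · have hui : y i ≤ u i := by have h' : y i ≤ u i + 0 := hyu i; linarith
        have hdi : dist (u i) (u' i) < (lam - 1) * m :=
          lt_of_le_of_lt (dist_le_pi_dist u u' i) hdist
        have hdi' : u i - u' i < (lam - 1) * m := by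
          rw [Real.dist_eq] at hdi
          have := (abs_lt.1 hdi).2
          linarith
        have hu'0 : 0 ≤ u' i := by have := (hSsub hu'S).1 i; simpa using this
        have hmz : m ≤ -z i := hmj i
        have hzi := hz i
        show x i ≤ u' i
        rw [hx]
        by_cases hca : y i - z i ≤ lam * (-z i)
        · have : (y i - z i) / lam ≤ -z i := by
            rw [div_le_iff₀ hlam0]
            linarith [mul_comm lam (-z i)]
          simp only []
          linarith
        · push_neg at hca
          have hdiv : (y i - z i) / lam * lam = y i - z i :=
            div_mul_cancel₀ _ (ne_of_gt hlam0)
          set t := (y i - z i) / lam with ht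
          have htgt : t * lam > (-z i) * lam := by rw [hdiv]; linarith [mul_comm lam (-z i)]
          have htm : -z i < t := lt_of_mul_lt_mul_right (by linarith [htgt]) (le_of_lt hlam0)
          show z i + t ≤ u' i
          nlinarith [htm, hmz, hdi', hui, hdiv]
      · show AffineMap.homothety z lam x = y
        funext i
        rw [AffineMap.homothety_apply]
        show lam • (x - z) i + z i = y i
        simp only [Pi.sub_apply, hx, smul_eq_mul]
        field_simp
        ring
    calc volume (Dset z (closure S) (fun _ => 0))
        ≤ volume ((AffineMap.homothety z lam) '' D0) := measure_mono hsub
      _ = ENNReal.ofReal |lam ^ (Module.finrank ℝ (Fin d → ℝ))| * volume D0 :=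
          Measure.addHaar_image_homothety _ _ _ _
      _ = ENNReal.ofReal (lam ^ d) * volume D0 := by
          rw [Module.finrank_fintype_fun_eq_card, Fintype.card_fin,
            abs_of_nonneg (pow_nonneg (le_of_lt hlam0) d)]
  set a := (volume (Dset z (closure S) (fun _ => 0))).toReal with ha
  set b := (volume D0).toReal with hb
  have hab : ∀ n : ℕ, a ≤ (1 + 1 / ((n:ℝ) + 1)) ^ d * b := by
    intro n
    have hpos : (0:ℝ) < 1 / ((n:ℝ) + 1) := by positivity
    have h1 : (1:ℝ) < 1 + 1 / ((n:ℝ) + 1) := by linarith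
    have h2 := ENNReal.toReal_mono
      (ENNReal.mul_ne_top ENNReal.ofReal_ne_top hfin0) (key _ h1)
    rwa [ENNReal.toReal_mul, ENNReal.toReal_ofReal (pow_nonneg (by linarith) d)] at h2
  have htend : Filter.Tendsto (fun n : ℕ => (1 + 1 / ((n:ℝ) + 1)) ^ d * b)
      Filter.atTop (nhds b) := by
    have h0 : Filter.Tendsto (fun n : ℕ => 1 / ((n:ℝ) + 1)) Filter.atTop (nhds 0) :=
      tendsto_one_div_add_atTop_nhds_zero_nat
    have h1 : Filter.Tendsto (fun n : ℕ => (1:ℝ) + 1 / ((n:ℝ) + 1)) Filter.atTop (nhds 1) := by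
      have := Filter.Tendsto.add (tendsto_const_nhds : Filter.Tendsto (fun _ : ℕ => (1:ℝ)) Filter.atTop (nhds 1)) h0
      simpa using this
    have h2 := (h1.pow d).mul_const b
    simpa using h2
  have hableq : a ≤ b := ge_of_tendsto' htend hab
  rw [← ENNReal.ofReal_toReal hfinL, ← ENNReal.ofReal_toReal hfin0]
  exact ENNReal.ofReal_le_ofReal hableq


theorem telescope (z : Fin d → ℝ) {K : Set (Fin d → ℝ)} (hKc : IsCompact K)
    (hK : K ⊆ Set.Icc 0 1) (hz : ∀ j, z j < 0) {ε : ℝ} (hε0 : 0 ≤ ε)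
    {Q : ℝ} (hQ : ∀ k : Fin d, ∏ i ∈ Finset.univ.erase k, (1 + ε - z i) ≤ Q)
    (hε0' : 0 ≤ ε) :
    ∀ m, m ≤ d → volume (Dset z K (cseq ε m)) ≤
      volume (Dset z K (cseq ε 0)) + (m : ℝ≥0∞) * ENNReal.ofReal (ε * Q) := by
  intro m
  induction m with
  | zero => intro _; simp
  | succ n ih =>
    intro hm
    have hn : n < d := by omega
    have hnd : n ≤ d := by omega
    set k : Fin d := ⟨n, hn⟩ with hk
    have hupd := cseq_succ ε n hn
    have hstep := step z hKc hK hz hε0 (cseq_nonneg hε0 n) (cseq_le hε0 n) k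
    have hofr : ENNReal.ofReal (ε * ∏ i ∈ Finset.univ.erase k, (1 + ε - z i))
        ≤ ENNReal.ofReal (ε * Q) :=
      ENNReal.ofReal_le_ofReal (mul_le_mul_of_nonneg_left (hQ k) hε0)
    calc volume (Dset z K (cseq ε (n + 1)))
        = volume (Dset z K (Function.update (cseq ε n) k ε)) := by rw [hupd]
      _ ≤ volume (Dset z K (cseq ε n))
          + ENNReal.ofReal (ε * ∏ i ∈ Finset.univ.erase k, (1 + ε - z i)) := hstep
      _ ≤ (volume (Dset z K (cseq ε 0)) + (n : ℝ≥0∞) * ENNReal.ofReal (ε * Q))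
          + ENNReal.ofReal (ε * Q) := add_le_add (ih hnd) hofr
      _ = volume (Dset z K (cseq ε 0)) + ((n : ℝ≥0∞) + 1) * ENNReal.ofReal (ε * Q) := by
          rw [add_mul, one_mul, add_assoc]
      _ = volume (Dset z K (cseq ε 0)) + ((n + 1 : ℕ) : ℝ≥0∞) * ENNReal.ofReal (ε * Q) := by
          norm_cast

end HVaux

/-- One-sided HV stability under ℓ∞ expansion, with `R = max_j (1 - z_j)`. -/
theorem hv_expansion_bound {d : ℕ} (hd : 1 ≤ d) (z : Fin d → ℝ) (hz : ∀ j, z j < 0)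
    (S : Set (Fin d → ℝ)) (hS : S.Nonempty) (hSsub : S ⊆ Set.Icc 0 1)
    (ε : ℝ) (hε0 : 0 ≤ ε) (hε1 : ε ≤ 1) :
    HV z (expandLinf S ε) ≤ HV z S + (d : ℝ) * ε * ((⨆ j, (1 - z j)) + ε) ^ (d - 1) := by
  classical
  have hne : Nonempty (Fin d) := ⟨⟨0, hd⟩⟩
  set K := closure S with hKdef
  have hKsub : K ⊆ Set.Icc 0 1 := closure_minimal hSsub isClosed_Icc
  have hKc : IsCompact K := IsCompact.of_isClosed_subset isCompact_Icc isClosed_closure hKsub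
  set R := ⨆ j, (1 - z j) with hR
  have hRj : ∀ j, 1 - z j ≤ R := fun j =>
    le_ciSup (f := fun j => 1 - z j) (Set.Finite.bddAbove (Set.finite_range _)) j
  have hR1 : (1 : ℝ) ≤ R := by
    have h0 := hz ⟨0, hd⟩
    have := hRj ⟨0, hd⟩
    linarith
  set Q := (R + ε) ^ (d - 1) with hQdef
  have hQ0 : 0 ≤ Q := pow_nonneg (by linarith) _
  have hPQ : ∀ k : Fin d, ∏ i ∈ Finset.univ.erase k, (1 + ε - z i) ≤ Q := by
    intro k
    calc ∏ i ∈ Finset.univ.erase k, (1 + ε - z i)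
        ≤ ∏ _i ∈ Finset.univ.erase k, (R + ε) :=
          Finset.prod_le_prod (fun i _ => by have := hz i; linarith)
            (fun i _ => by have := hRj i; linarith)
      _ = (R + ε) ^ ((Finset.univ.erase k).card) := Finset.prod_const _
      _ = Q := by
          rw [Finset.card_erase_of_mem (Finset.mem_univ k), Finset.card_univ, Fintype.card_fin]
  have htel := HVaux.telescope z hKc hKsub hz hε0 hPQ hε0 d le_rfl
  -- inclusion of the expanded dominated region
  have hsub1 : dominatedRegion z (expandLinf S ε) ⊆ HVaux.Dset z K (HVaux.cseq ε d) := by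
    rintro y ⟨x, ⟨s, hsS, hxs⟩, hzy, hyx⟩
    refine ⟨hzy, s, subset_closure hsS, fun i => ?_⟩
    have h1 : x i - s i ≤ ε := by
      have h2 : ‖(x - s) i‖ ≤ ‖x - s‖ := norm_le_pi_norm (x - s) i
      have h3 : |x i - s i| ≤ ε := by
        rw [Real.norm_eq_abs] at h2
        simpa using le_trans h2 hxs
      linarith [le_abs_self (x i - s i), h3]
    have h4 : HVaux.cseq ε d i = ε := by simp [HVaux.cseq, i.isLt]
    rw [h4]
    have := hyx i
    linarith
  have hsub3 : volume (HVaux.Dset z K (HVaux.cseq ε 0)) ≤ volume (dominatedRegion z S) := by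
    rw [HVaux.cseq_zero]
    exact HVaux.vol_Dset_closure_le z hz hSsub
  have hchain : volume (dominatedRegion z (expandLinf S ε)) ≤
      volume (dominatedRegion z S) + (d : ℝ≥0∞) * ENNReal.ofReal (ε * Q) :=
    le_trans (measure_mono hsub1) (le_trans htel (add_le_add_left hsub3 _))
  have hDSbox : dominatedRegion z S ⊆ Set.Icc z 1 := by
    rintro y ⟨u, hu, hzy, hyu⟩
    exact ⟨hzy, le_trans hyu (hSsub hu).2⟩
  have hfinS : volume (dominatedRegion z S) ≠ ⊤ :=
    ne_top_of_le_ne_top isCompact_Icc.measure_lt_top.ne (measure_mono hDSbox)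
  have hterm : (d : ℝ≥0∞) * ENNReal.ofReal (ε * Q) = ENNReal.ofReal ((d : ℝ) * ε * Q) := by
    rw [mul_assoc, ← ENNReal.ofReal_natCast d, ← ENNReal.ofReal_mul (by positivity)]
  rw [hterm] at hchain
  have hRHSfin : volume (dominatedRegion z S) + ENNReal.ofReal ((d : ℝ) * ε * Q) ≠ ⊤ :=
    ENNReal.add_ne_top.2 ⟨hfinS, ENNReal.ofReal_ne_top⟩
  have hfinal := ENNReal.toReal_mono hRHSfin hchain
  rw [ENNReal.toReal_add hfinS ENNReal.ofReal_ne_top,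
    ENNReal.toReal_ofReal (by positivity)] at hfinal
  exact hfinal
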